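/- Equivariant matrix identity G' = A·H' + C^ζ_{≥n-k+2}: for integers n ≥ k ≥ 1 and every 1 ≤ i ≤ k, (-1)^{n-k+i} G'_{n-k+i}(z,ζ) = Σ_{j=1}^{k} A_{ij} · (-1)^{n-k+j} h'_{n-k+j}(z,ζ) + C_i, where C_i = c^ζ_{≥ n-k+1+i} for 1 ≤ i ≤ k−1 and C_k = 0, in ℤ[z_1,…,z_k, ζ_1,…,ζ_n]. -/

import Mathlib

open Finset MvPolynomial

noncomputable section

/-- The elementary symmetric polynomial `e_r` of a family of ring elements. -/
def esymmF {R : Type*} [CommRing R] {m : ℕ} (f : Fin m → R) (r : ℕ) : R :=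
  ∑ t ∈ Finset.powersetCard r Finset.univ, ∏ j ∈ t, f j

/-- The complete homogeneous symmetric polynomial `h_r` of a family. -/
def hsymmF {R : Type*} [CommRing R] {m : ℕ} (f : Fin m → R) (r : ℕ) : R :=
  ∑ μ : Sym (Fin m) r, (μ.1.map f).prod

/-- `e_r(z)`: elementary symmetric polynomial in the variables `z_1,…,z_k`
inside `ℤ[z_1,…,z_k, ζ_1,…,ζ_n]`. -/
def eZ (k n : ℕ) (r : ℕ) : MvPolynomial (Fin k ⊕ Fin n) ℤ :=
  esymmF (fun i : Fin k => X (Sum.inl i)) r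

/-- `e_r(ζ)`: elementary symmetric polynomial in the variables `ζ_1,…,ζ_n`. -/
def eZeta (k n : ℕ) (r : ℕ) : MvPolynomial (Fin k ⊕ Fin n) ℤ :=
  esymmF (fun j : Fin n => X (Sum.inr j)) r

/-- `h_r(z)`: complete homogeneous symmetric polynomial in `z_1,…,z_k`. -/
def hZ (k n : ℕ) (r : ℕ) : MvPolynomial (Fin k ⊕ Fin n) ℤ :=
  hsymmF (fun i : Fin k => X (Sum.inl i)) r

/-- The single-row Grothendieck polynomial
`G_j(z) = Σ_{a,b ≥ 0, a+b ≤ k} (-1)^b h_{j+a}(z) e_b(z)`. -/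
def GZ (k n : ℕ) (j : ℕ) : MvPolynomial (Fin k ⊕ Fin n) ℤ :=
  ∑ a ∈ Finset.range (k + 1), ∑ b ∈ Finset.range (k + 1 - a),
    (-1) ^ b * hZ k n (j + a) * eZ k n b

/-- The equivariant complete homogeneous polynomial
`h'_j(z,ζ) = Σ_{a+b=j} (-1)^a e_a(ζ) h_b(z)`. -/
def hPrime (k n : ℕ) (j : ℕ) : MvPolynomial (Fin k ⊕ Fin n) ℤ :=
  ∑ p ∈ Finset.HasAntidiagonal.antidiagonal j, (-1) ^ p.1 * eZeta k n p.1 * hZ k n p.2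

/-- The equivariant Grothendieck polynomial
`G'_j(z,ζ) = Σ_{a+b=j} (-1)^a e_a(ζ) G_b(z)`. -/
def GPrime (k n : ℕ) (j : ℕ) : MvPolynomial (Fin k ⊕ Fin n) ℤ :=
  ∑ p ∈ Finset.HasAntidiagonal.antidiagonal j, (-1) ^ p.1 * eZeta k n p.1 * GZ k n p.2

/-- The truncation `c^z_{≥j} = Σ_{i=j}^{k} (-1)^{i-j} e_i(z)`. -/
def cGeZ (k n : ℕ) (j : ℕ) : MvPolynomial (Fin k ⊕ Fin n) ℤ :=
  ∑ i ∈ Finset.Icc j k, (-1) ^ (i - j) * eZ k n i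

/-- `c'_{≥ℓ}(z,ζ) = e_ℓ(ζ) + Σ_{m=1}^{k-1} e_{ℓ-m}(ζ) c^z_{≥ m+1}`,
with the convention `e_s(ζ) = 0` for `s < 0` (i.e. for `m > ℓ`). -/
def cPrimeGe (k n : ℕ) (ℓ : ℕ) : MvPolynomial (Fin k ⊕ Fin n) ℤ :=
  eZeta k n ℓ + ∑ m ∈ Finset.Icc 1 (k - 1),
    (if m ≤ ℓ then eZeta k n (ℓ - m) * cGeZ k n (m + 1) else 0)

/-- The truncation `c^z_{≤m} = Σ_{i=0}^{m} (-1)^i e_i(z)`. -/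
def cLeZ (k n : ℕ) (m : ℕ) : MvPolynomial (Fin k ⊕ Fin n) ℤ :=
  ∑ i ∈ Finset.range (m + 1), (-1) ^ i * eZ k n i

/-- The truncation `c^ζ_{≥j} = Σ_{i=j}^{n} (-1)^{i-j} e_i(ζ)`. -/
def cGeZeta (k n : ℕ) (j : ℕ) : MvPolynomial (Fin k ⊕ Fin n) ℤ :=
  ∑ i ∈ Finset.Icc j n, (-1) ^ (i - j) * eZeta k n i

/-- The `k × k` matrix `A` (with `1`-based indices `i, j`):
`A_{ij} = (-1)^{k-i} c^z_{≥ k-j+1}` for `j < i` and `A_{ij} = (-1)^{j-i} c^z_{≤ k-j}` for `j ≥ i`. -/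
def AMat (k n : ℕ) (i j : ℕ) : MvPolynomial (Fin k ⊕ Fin n) ℤ :=
  if j < i then (-1) ^ (k - i) * cGeZ k n (k - j + 1) else (-1) ^ (j - i) * cLeZ k n (k - j)

/-- The column vector `C^ζ_{≥n-k+2}`: `C_i = c^ζ_{≥ n-k+1+i}` for `1 ≤ i ≤ k-1` and `C_k = 0`. -/
def CVec (k n : ℕ) (i : ℕ) : MvPolynomial (Fin k ⊕ Fin n) ℤ :=
  if i < k then cGeZeta k n (n - k + 1 + i) else 0

namespace SymAux

variable {R : Type*} [CommRing R]

/-- Generic elementary symmetric sum over a fintype. -/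
def eF {α : Type*} [Fintype α] (f : α → R) (r : ℕ) : R :=
  ∑ t ∈ Finset.powersetCard r Finset.univ, ∏ j ∈ t, f j

/-- Generic complete homogeneous symmetric sum over a fintype. -/
def hF {α : Type*} [Fintype α] [DecidableEq α] (f : α → R) (r : ℕ) : R :=
  ∑ μ : Sym α r, (μ.1.map f).prod

lemma eF_eq_esymm {α : Type*} [Fintype α] (f : α → R) (r : ℕ) :
    eF f r = ((Finset.univ.val.map f).esymm r) := (Finset.esymm_map_val f _ r).symm

lemma eF_comp_equiv {α β : Type*} [Fintype α] [Fintype β] (e : β ≃ α) (f : α → R) (r : ℕ) :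
    eF (f ∘ e) r = eF f r := by
  rw [eF_eq_esymm, eF_eq_esymm]
  congr 1
  have h1 : (Finset.univ.val.map (⇑e)).map f = (Finset.univ.val.map (f ∘ ⇑e)) := by
    rw [Multiset.map_map]
  rw [← h1]
  congr 1
  have := Finset.map_univ_equiv e
  calc (Finset.univ : Finset β).val.map ⇑e = (Finset.univ.map e.toEmbedding).val := rfl
    _ = (Finset.univ : Finset α).val := by rw [this]

lemma hF_comp_equiv {α β : Type*} [Fintype α] [Fintype β] [DecidableEq α] [DecidableEq β]
    (e : β ≃ α) (f : α → R) (r : ℕ) :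
    hF (f ∘ e) r = hF f r := by
  let E : Sym β r ≃ Sym α r :=
    { toFun := Sym.map e
      invFun := Sym.map e.symm
      left_inv := fun μ => by
        rw [Sym.map_map]
        simp [Sym.map_id']
      right_inv := fun μ => by
        rw [Sym.map_map]
        simp [Sym.map_id'] }
  rw [hF, hF]
  refine Fintype.sum_equiv E _ _ fun μ => ?_
  show (μ.1.map (f ∘ ⇑e)).prod = (((Sym.map ⇑e μ)).1.map f).prod
  rw [show ((Sym.map ⇑e μ)).1 = μ.1.map ⇑e from Sym.coe_map μ ⇑e, Multiset.map_map]

lemma esymm_cons (a : R) (s : Multiset R) (r : ℕ) :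
    (a ::ₘ s).esymm (r + 1) = s.esymm (r + 1) + a * s.esymm r := by
  rw [Multiset.esymm, Multiset.powersetCard_cons, Multiset.map_add, Multiset.sum_add,
    Multiset.map_map]
  congr 1
  have : (Multiset.prod ∘ Multiset.cons a) = fun t : Multiset R => a * t.prod := by
    funext t; simp
  rw [this, Multiset.sum_map_mul_left, Multiset.esymm]

lemma eF_option {α : Type*} [Fintype α] (g : Option α → R) (r : ℕ) :
    eF g (r + 1) = eF (g ∘ some) (r + 1) + g none * eF (g ∘ some) r := by
  have huniv : (Finset.univ : Finset (Option α)).val.map g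
      = g none ::ₘ ((Finset.univ : Finset α).val.map (g ∘ some)) := by
    rw [univ_option]
    show Multiset.map g (Finset.cons none (Finset.univ.map Function.Embedding.some) (by simp)).val = _
    rw [Finset.cons_val, Multiset.map_cons]
    congr 1
    show Multiset.map g (Multiset.map Function.Embedding.some Finset.univ.val) = _
    rw [Multiset.map_map]
    rfl
  rw [eF_eq_esymm, eF_eq_esymm, eF_eq_esymm, huniv, esymm_cons]

lemma hF_option {α : Type*} [Fintype α] [DecidableEq α] (g : Option α → R) (r : ℕ) :
    hF g (r + 1) = hF (g ∘ some) (r + 1) + g none * hF g r := by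
  classical
  rw [show hF g (r+1) = ∑ μ : Sym (Option α) (r+1), (μ.1.map g).prod from rfl]
  rw [← Equiv.sum_comp (symOptionSuccEquiv (α := α) (n := r)).symm
      (fun μ : Sym (Option α) (r+1) => (μ.1.map g).prod)]
  rw [Fintype.sum_sum_type]
  have h1 : ∀ s : Sym (Option α) r,
      (((symOptionSuccEquiv.symm (Sum.inl s) : Sym (Option α) (r+1))).1.map g).prod
        = g none * ((s.1.map g).prod) := by
    intro s
    show (((none ::ₛ s : Sym (Option α) (r+1))).1.map g).prod = _
    rw [show ((none ::ₛ s : Sym (Option α) (r+1))).1 = none ::ₘ s.1 from Sym.coe_cons s none]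
    simp
  have h2 : ∀ s : Sym α (r+1),
      (((symOptionSuccEquiv.symm (Sum.inr s) : Sym (Option α) (r+1))).1.map g).prod
        = ((s.1.map (g ∘ some)).prod) := by
    intro s
    show (((s.map Function.Embedding.some : Sym (Option α) (r+1))).1.map g).prod = _
    rw [show ((s.map Function.Embedding.some : Sym (Option α) (r+1))).1
        = s.1.map Function.Embedding.some from Sym.coe_map s _, Multiset.map_map]
    rfl
  rw [Finset.sum_congr rfl (fun s _ => h1 s), Finset.sum_congr rfl (fun s _ => h2 s)]
  rw [← Finset.mul_sum]
  rw [hF, hF]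
  ring

lemma eF_fin {m : ℕ} (f : Fin m → R) (r : ℕ) : esymmF f r = eF f r := rfl

lemma hF_fin {m : ℕ} (f : Fin m → R) (r : ℕ) : hsymmF f r = hF f r := rfl

lemma esymmF_succ {m r : ℕ} (f : Fin (m + 1) → R) :
    esymmF f (r + 1) = esymmF (f ∘ Fin.succ) (r + 1) + f 0 * esymmF (f ∘ Fin.succ) r := by
  have hg : ∀ j : ℕ, eF (f ∘ (finSuccEquiv m).symm) j = eF f j := by
    intro j
    rw [← eF_comp_equiv (finSuccEquiv m) (f ∘ (finSuccEquiv m).symm) j]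
    congr 1
    funext x
    simp
  have hsome : (f ∘ (finSuccEquiv m).symm) ∘ some = f ∘ Fin.succ := by
    funext i
    simp [finSuccEquiv_symm_some]
  have hnone : (f ∘ (finSuccEquiv m).symm) none = f 0 := by simp [finSuccEquiv_symm_none]
  have := eF_option (f ∘ (finSuccEquiv m).symm) r
  rw [hg, hsome, hnone] at this
  rw [eF_fin, eF_fin, eF_fin, this]

lemma hsymmF_succ {m r : ℕ} (f : Fin (m + 1) → R) :
    hsymmF f (r + 1) = hsymmF (f ∘ Fin.succ) (r + 1) + f 0 * hsymmF f r := by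
  have hg : ∀ j : ℕ, hF (f ∘ (finSuccEquiv m).symm) j = hF f j := by
    intro j
    rw [← hF_comp_equiv (finSuccEquiv m) (f ∘ (finSuccEquiv m).symm) j]
    congr 1
    funext x
    simp
  have hsome : (f ∘ (finSuccEquiv m).symm) ∘ some = f ∘ Fin.succ := by
    funext i
    simp [finSuccEquiv_symm_some]
  have hnone : (f ∘ (finSuccEquiv m).symm) none = f 0 := by simp [finSuccEquiv_symm_none]
  have := hF_option (f ∘ (finSuccEquiv m).symm) r
  rw [hg, hsome, hnone, hg] at this
  rw [hF_fin, hF_fin, hF_fin, this]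

lemma esymmF_zero {m : ℕ} (f : Fin m → R) : esymmF f 0 = 1 := by
  simp [esymmF]

lemma hsymmF_zero {m : ℕ} (f : Fin m → R) : hsymmF f 0 = 1 := by
  rw [hsymmF]
  rw [Fintype.sum_eq_single (Sym.nil) (fun μ hμ => absurd (Subsingleton.elim μ Sym.nil) hμ)]
  simp

lemma esymmF_eq_zero {m r : ℕ} (f : Fin m → R) (h : m < r) : esymmF f r = 0 := by
  rw [esymmF]
  rw [Finset.powersetCard_eq_empty.2 (by simpa using h)]
  simp

lemma hsymmF_zero_of_isEmpty {r : ℕ} (f : Fin 0 → R) (h : 1 ≤ r) : hsymmF f r = 0 := by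
  have : IsEmpty (Sym (Fin 0) r) := by
    constructor
    intro μ
    have hc : Multiset.card μ.1 = r := μ.2
    have : μ.1 ≠ 0 := by
      intro h0
      rw [h0] at hc
      simp at hc
      omega
    obtain ⟨x, -⟩ := Multiset.exists_mem_of_ne_zero this
    exact Fin.elim0 x
  rw [hsymmF, Finset.univ_eq_empty, Finset.sum_empty]

/-- Orthogonality of elementary and complete homogeneous symmetric functions. -/
lemma orth {m : ℕ} (f : Fin m → R) (d : ℕ) (hd : 1 ≤ d) :
    ∑ b ∈ Finset.range (d + 1), (-1 : R) ^ b * esymmF f b * hsymmF f (d - b) = 0 := by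
  induction m with
  | zero =>
    refine Finset.sum_eq_zero fun b hb => ?_
    rcases Nat.eq_zero_or_pos b with hb0 | hb1
    · subst hb0
      rw [hsymmF_zero_of_isEmpty f (by omega)]
      ring
    · rw [esymmF_eq_zero f (by omega)]
      ring
  | succ m ih =>
    set f' : Fin m → R := f ∘ Fin.succ with hf'
    set x : R := f 0 with hx
    have hsuccH : ∀ c : ℕ, 1 ≤ c →
        hsymmF f c = hsymmF f' c + x * hsymmF f (c - 1) := by
      intro c hc
      obtain ⟨r, rfl⟩ : ∃ r, c = r + 1 := ⟨c - 1, by omega⟩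
      rw [hsymmF_succ f]
      simp
      rfl
    have claim1 : ∑ b ∈ Finset.range (d + 1), (-1 : R) ^ b * esymmF f b * hsymmF f (d - b)
        = (∑ b ∈ Finset.range (d + 1), (-1 : R) ^ b * esymmF f' b * hsymmF f (d - b))
          - x * (∑ b ∈ Finset.range d,
              (-1 : R) ^ b * esymmF f' b * hsymmF f ((d - 1) - b)) := by
      rw [Finset.sum_range_succ' (fun b => (-1 : R) ^ b * esymmF f b * hsymmF f (d - b)) d]
      rw [Finset.sum_range_succ' (fun b => (-1 : R) ^ b * esymmF f' b * hsymmF f (d - b)) d]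
      have expand : ∀ b ∈ Finset.range d,
          (-1 : R) ^ (b + 1) * esymmF f (b + 1) * hsymmF f (d - (b + 1))
            = (-1 : R) ^ (b + 1) * esymmF f' (b + 1) * hsymmF f (d - (b + 1))
              + (-(x * ((-1 : R) ^ b * esymmF f' b * hsymmF f ((d - 1) - b)))) := by
        intro b hb
        rw [esymmF_succ f]
        have h1 : d - (b + 1) = (d - 1) - b := by omega
        rw [h1, ← hf', ← hx]
        ring
      rw [Finset.sum_congr rfl expand, Finset.sum_add_distrib, Finset.sum_neg_distrib,
        ← Finset.mul_sum]
      rw [esymmF_zero, esymmF_zero]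
      ring
    have claim2 : ∑ b ∈ Finset.range (d + 1), (-1 : R) ^ b * esymmF f' b * hsymmF f (d - b)
        = (∑ b ∈ Finset.range (d + 1), (-1 : R) ^ b * esymmF f' b * hsymmF f' (d - b))
          + x * (∑ b ∈ Finset.range d,
              (-1 : R) ^ b * esymmF f' b * hsymmF f ((d - 1) - b)) := by
      rw [Finset.sum_range_succ (fun b => (-1 : R) ^ b * esymmF f' b * hsymmF f (d - b)) d]
      rw [Finset.sum_range_succ (fun b => (-1 : R) ^ b * esymmF f' b * hsymmF f' (d - b)) d]
      have expand : ∀ b ∈ Finset.range d,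
          (-1 : R) ^ b * esymmF f' b * hsymmF f (d - b)
            = (-1 : R) ^ b * esymmF f' b * hsymmF f' (d - b)
              + x * ((-1 : R) ^ b * esymmF f' b * hsymmF f ((d - 1) - b)) := by
        intro b hb
        simp only [Finset.mem_range] at hb
        rw [hsuccH (d - b) (by omega)]
        have h1 : d - b - 1 = (d - 1) - b := by omega
        rw [h1]
        ring
      rw [Finset.sum_congr rfl expand, Finset.sum_add_distrib, ← Finset.mul_sum]
      have h0 : hsymmF f (d - d) = hsymmF f' (d - d) := by
        simp only [Nat.sub_self]
        rw [hsymmF_zero, hsymmF_zero]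
      rw [h0]
      ring
    rw [claim1, claim2, ih f']
    ring

end SymAux

namespace GAux

open SymAux

variable (k n : ℕ)

/-- `h` with integer index, zero for negative index. -/
def hInt (q : ℤ) : MvPolynomial (Fin k ⊕ Fin n) ℤ :=
  if 0 ≤ q then hZ k n q.toNat else 0

/-- `G` with integer index (equal to `GZ` for nonneg index, `1` on `[-k,0]`). -/
def GInt (q : ℤ) : MvPolynomial (Fin k ⊕ Fin n) ℤ :=
  ∑ a ∈ Finset.range (k + 1), cLeZ k n (k - a) * hInt k n (q + a)

lemma hInt_ofNat (j : ℕ) : hInt k n (j : ℤ) = hZ k n j := by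
  rw [hInt, if_pos (by positivity)]
  simp

lemma hInt_neg {q : ℤ} (h : q < 0) : hInt k n q = 0 := if_neg (by omega)

lemma hZ_zero : hZ k n 0 = 1 := by
  rw [hZ]; exact hsymmF_zero _

lemma eZ_zero : eZ k n 0 = 1 := by
  rw [eZ]; exact esymmF_zero _

lemma eZ_of_gt {b : ℕ} (h : k < b) : eZ k n b = 0 := by
  rw [eZ]; exact esymmF_eq_zero _ h

lemma orthInt (m : ℤ) (hm : 1 ≤ m) :
    ∑ b ∈ Finset.range (k + 1), (-1 : MvPolynomial (Fin k ⊕ Fin n) ℤ) ^ b * eZ k n b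
      * hInt k n (m - b) = 0 := by
  set d : ℕ := m.toNat with hd
  have hdm : (d : ℤ) = m := Int.toNat_of_nonneg (by omega)
  have hd1 : 1 ≤ d := by omega
  have horth : ∑ b ∈ Finset.range (d + 1), (-1 : MvPolynomial (Fin k ⊕ Fin n) ℤ) ^ b
      * eZ k n b * hZ k n (d - b) = 0 := orth _ d hd1
  set M : ℕ := max k d with hM
  set F : ℕ → MvPolynomial (Fin k ⊕ Fin n) ℤ :=
    fun b => (-1) ^ b * eZ k n b * hInt k n (m - b) with hF
  have h1 : ∑ b ∈ Finset.range (k + 1), F b = ∑ b ∈ Finset.range (M + 1), F b := by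
    refine Finset.sum_subset (Finset.range_subset_range.2 (Nat.succ_le_succ (le_max_left k d)))
      fun b _ hb => ?_
    simp only [Finset.mem_range, not_lt] at hb
    rw [hF]
    simp only
    rw [eZ_of_gt k n (by omega)]
    ring
  have h2 : ∑ b ∈ Finset.range (d + 1), F b = ∑ b ∈ Finset.range (M + 1), F b := by
    refine Finset.sum_subset (Finset.range_subset_range.2 (Nat.succ_le_succ (le_max_right k d)))
      fun b _ hb => ?_
    simp only [Finset.mem_range, not_lt] at hb
    rw [hF]
    simp only
    rw [hInt_neg k n (by omega)]
    ring
  have h3 : ∑ b ∈ Finset.range (d + 1), F b = ∑ b ∈ Finset.range (d + 1),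
      (-1 : MvPolynomial (Fin k ⊕ Fin n) ℤ) ^ b * eZ k n b * hZ k n (d - b) := by
    refine Finset.sum_congr rfl fun b hb => ?_
    simp only [Finset.mem_range] at hb
    rw [hF]
    simp only
    rw [show m - (b : ℤ) = ((d - b : ℕ) : ℤ) by push_cast [Nat.cast_sub (by omega : b ≤ d)]; omega,
      hInt_ofNat]
  rw [h1, ← h2, h3, horth]

lemma cLeZ_zero : cLeZ k n 0 = 1 := by
  rw [cLeZ, Finset.sum_range_one, eZ_zero]
  ring

lemma cLeZ_succ (m : ℕ) :
    cLeZ k n (m + 1) = cLeZ k n m + (-1) ^ (m + 1) * eZ k n (m + 1) :=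
  Finset.sum_range_succ _ (m + 1)

lemma orthInt' (q : ℤ) (hq : -(k : ℤ) ≤ q) :
    (∑ a ∈ Finset.range k, (-1 : MvPolynomial (Fin k ⊕ Fin n) ℤ) ^ (k - a) * eZ k n (k - a)
      * hInt k n (q + 1 + a)) + hInt k n (q + 1 + k) = 0 := by
  have h := orthInt k n (q + k + 1) (by omega)
  rw [Finset.sum_range_succ'] at h
  -- h : (∑ b ∈ range k, (-1)^(b+1) * eZ (b+1) * hInt (q+k+1 - (b+1))) + ... = 0
  rw [← Finset.sum_range_reflect] at h
  have e0 : (-1 : MvPolynomial (Fin k ⊕ Fin n) ℤ) ^ 0 * eZ k n 0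
      * hInt k n (q + (k:ℤ) + 1 - ((0:ℕ):ℤ)) = hInt k n (q + 1 + k) := by
    rw [eZ_zero, show q + (k:ℤ) + 1 - ((0:ℕ):ℤ) = q + 1 + k by push_cast; ring]
    ring
  rw [e0] at h
  have hcong : ∀ a ∈ Finset.range k,
      (-1 : MvPolynomial (Fin k ⊕ Fin n) ℤ) ^ (k - 1 - a + 1) * eZ k n (k - 1 - a + 1)
          * hInt k n (q + k + 1 - ((k - 1 - a : ℕ) + 1 : ℕ))
        = (-1) ^ (k - a) * eZ k n (k - a) * hInt k n (q + 1 + a) := by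
    intro a ha
    simp only [Finset.mem_range] at ha
    have h1 : k - 1 - a + 1 = k - a := by omega
    have h2 : (q + (k:ℤ) + 1 - ((k - 1 - a : ℕ) + 1 : ℕ)) = q + 1 + a := by
      push_cast [Nat.cast_sub (by omega : a ≤ k - 1), Nat.cast_sub (by omega : 1 ≤ k)]
      ring
    rw [h2, h1]
  rw [Finset.sum_congr rfl hcong] at h
  exact h

lemma npow_helper (a b c : ℕ) (h : a = b + 2 * c) :
    ((-1 : MvPolynomial (Fin k ⊕ Fin n) ℤ)) ^ a = (-1) ^ b := by
  subst h
  rw [pow_add, pow_mul, neg_one_sq, one_pow, mul_one]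

lemma GZ_sum (j : ℕ) :
    GZ k n j = ∑ a ∈ Finset.range (k + 1), cLeZ k n (k - a) * hZ k n (j + a) := by
  rw [GZ]
  refine Finset.sum_congr rfl fun a ha => ?_
  simp only [Finset.mem_range] at ha
  have hka : k + 1 - a = (k - a) + 1 := by omega
  rw [hka, cLeZ, Finset.sum_mul]
  refine Finset.sum_congr rfl fun b _ => ?_
  ring

lemma GInt_ofNat (j : ℕ) : GInt k n (j : ℤ) = GZ k n j := by
  rw [GInt, GZ_sum]
  refine Finset.sum_congr rfl fun a _ => ?_
  rw [show (j : ℤ) + (a : ℤ) = ((j + a : ℕ) : ℤ) by push_cast; ring, hInt_ofNat]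

lemma Grec (q : ℤ) (hq : -(k : ℤ) ≤ q) :
    GInt k n (q + 1) = GInt k n q - cLeZ k n k * hInt k n q := by
  have horth := orthInt' k n q hq
  rw [GInt, GInt]
  rw [Finset.sum_range_succ (fun a => cLeZ k n (k - a) * hInt k n (q + 1 + a)) k]
  rw [Finset.sum_range_succ' (fun a => cLeZ k n (k - a) * hInt k n (q + a)) k]
  have hc1 : ∀ a ∈ Finset.range k,
      cLeZ k n (k - a) * hInt k n (q + 1 + a)
        = cLeZ k n (k - (a + 1)) * hInt k n (q + ((a + 1 : ℕ) : ℤ))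
          + (-1) ^ (k - a) * eZ k n (k - a) * hInt k n (q + 1 + a) := by
    intro a ha
    simp only [Finset.mem_range] at ha
    have h1 : k - a = (k - (a + 1)) + 1 := by omega
    have h2 : q + ((a + 1 : ℕ) : ℤ) = q + 1 + a := by push_cast; ring
    rw [h2, h1, cLeZ_succ, ← h1]
    ring
  rw [Finset.sum_congr rfl hc1, Finset.sum_add_distrib]
  rw [show k - k = 0 from Nat.sub_self k, cLeZ_zero, Nat.sub_zero]
  have h3 : q + ((k : ℕ) : ℤ) + 1 = q + 1 + k := by push_cast; ring
  rw [show q + 1 + ((k : ℕ) : ℤ) = q + 1 + k from rfl]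
  have h4 : q + ((0 : ℕ) : ℤ) = q := by push_cast; ring
  rw [h4]
  linear_combination horth

lemma GInt_one (q : ℤ) (h1 : -(k : ℤ) ≤ q) (h2 : q ≤ 0) : GInt k n q = 1 := by
  have base : GInt k n (-(k : ℤ)) = 1 := by
    rw [GInt]
    rw [Finset.sum_eq_single_of_mem k (Finset.self_mem_range_succ k)
      (fun a ha hne => by
        simp only [Finset.mem_range] at ha
        rw [hInt_neg k n (by omega : -(k:ℤ) + a < 0)]
        ring)]
    rw [Nat.sub_self, cLeZ_zero, show -(k : ℤ) + (k : ℕ) = ((0:ℕ):ℤ) by push_cast; ring,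
      hInt_ofNat, hZ_zero]
    ring
  have key : ∀ t : ℕ, t ≤ k → GInt k n (-(k : ℤ) + t) = 1 := by
    intro t
    induction t with
    | zero => intro _; simpa using base
    | succ t ih =>
      intro ht
      have hrec := Grec k n (-(k : ℤ) + t) (by omega)
      rw [hInt_neg k n (by omega : -(k:ℤ) + t < 0)] at hrec
      have : -(k : ℤ) + ((t + 1 : ℕ) : ℤ) = -(k : ℤ) + t + 1 := by push_cast; ring
      rw [this, hrec, ih (by omega)]
      ring
  have := key (q + k).toNat (by omega)
  rw [show -(k : ℤ) + ((q + k).toNat : ℤ) = q by omega] at this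
  exact this

/-- Normalized matrix entries. -/
def Bc (i j : ℕ) : MvPolynomial (Fin k ⊕ Fin n) ℤ :=
  if j < i then (-1) ^ (k - j) * cGeZ k n (k - j + 1) else cLeZ k n (k - j)

lemma normA {i j : ℕ} (hi1 : 1 ≤ i) (hik : i ≤ k) (hj1 : 1 ≤ j) (hjk : j ≤ k) :
    AMat k n i j * (-1) ^ j = (-1) ^ i * Bc k n i j := by
  rw [AMat, Bc]
  by_cases h : j < i
  · rw [if_pos h, if_pos h]
    have he : i + (k - j) = ((k - i) + j) + 2 * (i - j) := by omega
    have hsign : ((-1 : MvPolynomial (Fin k ⊕ Fin n) ℤ)) ^ (k - i) * (-1) ^ j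
        = (-1) ^ i * (-1) ^ (k - j) := by
      have h1 : ((-1 : MvPolynomial (Fin k ⊕ Fin n) ℤ)) ^ (k - i) * (-1) ^ j
          = (-1) ^ ((k - i) + j) := (pow_add _ _ _).symm
      have h2 : ((-1 : MvPolynomial (Fin k ⊕ Fin n) ℤ)) ^ i * (-1) ^ (k - j)
          = (-1) ^ (i + (k - j)) := (pow_add _ _ _).symm
      rw [h1, h2, npow_helper k n _ _ _ he]
    calc (-1 : MvPolynomial (Fin k ⊕ Fin n) ℤ) ^ (k - i) * cGeZ k n (k - j + 1) * (-1) ^ j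
        = ((-1) ^ (k - i) * (-1) ^ j) * cGeZ k n (k - j + 1) := by ring
      _ = ((-1) ^ i * (-1) ^ (k - j)) * cGeZ k n (k - j + 1) := by rw [hsign]
      _ = (-1) ^ i * ((-1) ^ (k - j) * cGeZ k n (k - j + 1)) := by ring
  · rw [if_neg h, if_neg h]
    have he : (j - i) + j = i + 2 * (j - i) := by omega
    calc (-1 : MvPolynomial (Fin k ⊕ Fin n) ℤ) ^ (j - i) * cLeZ k n (k - j) * (-1) ^ j
        = ((-1) ^ (j - i) * (-1) ^ j) * cLeZ k n (k - j) := by ring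
      _ = (-1) ^ i * cLeZ k n (k - j) := by
          have h1 : ((-1 : MvPolynomial (Fin k ⊕ Fin n) ℤ)) ^ (j - i) * (-1) ^ j
              = (-1) ^ ((j - i) + j) := (pow_add _ _ _).symm
          rw [h1, npow_helper k n _ _ _ he]

lemma CC {i : ℕ} (hi1 : 1 ≤ i) (hik : i ≤ k) :
    (-1) ^ (k - i) * cGeZ k n (k - i + 1) - cLeZ k n (k - i) = -cLeZ k n k := by
  have hsplit : cLeZ k n k = cLeZ k n (k - i)
      + ∑ b ∈ Finset.Ico (k - i + 1) (k + 1), (-1) ^ b * eZ k n b := by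
    rw [cLeZ, cLeZ, Finset.range_eq_Ico, Finset.range_eq_Ico]
    exact (Finset.sum_Ico_consecutive (fun b => (-1 : MvPolynomial (Fin k ⊕ Fin n) ℤ) ^ b * eZ k n b) (by omega : 0 ≤ k - i + 1)
      (by omega : k - i + 1 ≤ k + 1)).symm
  have hge : (-1) ^ (k - i) * cGeZ k n (k - i + 1)
      = -∑ b ∈ Finset.Ico (k - i + 1) (k + 1), (-1) ^ b * eZ k n b := by
    rw [cGeZ, Finset.mul_sum, ← Finset.sum_neg_distrib]
    rw [show Finset.Icc (k - i + 1) k = Finset.Ico (k - i + 1) (k + 1) from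
      (Finset.Ico_add_one_right_eq_Icc _ _).symm]
    refine Finset.sum_congr rfl fun b hb => ?_
    simp only [Finset.mem_Ico] at hb
    have he : b = ((k - i) + (b - (k - i + 1))) + 1 := by omega
    calc (-1 : MvPolynomial (Fin k ⊕ Fin n) ℤ) ^ (k - i) * ((-1) ^ (b - (k - i + 1)) * eZ k n b)
        = (-1) ^ ((k - i) + (b - (k - i + 1))) * eZ k n b := by rw [pow_add]; ring
      _ = -((-1) ^ b * eZ k n b) := by
          have hpow : ((-1 : MvPolynomial (Fin k ⊕ Fin n) ℤ)) ^ b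
              = -(-1) ^ ((k - i) + (b - (k - i + 1))) := by
            conv_lhs => rw [he]
            rw [pow_succ]
            ring
          rw [hpow]
          ring
  rw [hge, hsplit]
  ring

/-- The key single-row identity. -/
lemma Key : ∀ i, 1 ≤ i → i ≤ k → ∀ s : ℤ, -(k : ℤ) ≤ s →
    GInt k n ((i : ℤ) + s) = ∑ j ∈ Finset.Icc 1 k, Bc k n i j * hInt k n ((j : ℤ) + s) := by
  intro i hi1
  induction i, hi1 using Nat.le_induction with
  | base =>
    intro hk s hs
    have hBc : ∀ j ∈ Finset.Icc 1 k, Bc k n 1 j * hInt k n ((j : ℤ) + s)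
        = cLeZ k n (k - j) * hInt k n ((j : ℤ) + s) := by
      intro j hj
      simp only [Finset.mem_Icc] at hj
      rw [Bc, if_neg (by omega)]
    rw [Finset.sum_congr rfl hBc]
    rw [show Finset.Icc 1 k = Finset.Ico 1 (k + 1) from (Finset.Ico_add_one_right_eq_Icc _ _).symm]
    rw [Finset.sum_Ico_eq_sum_range]
    simp only [show k + 1 - 1 = k from rfl]
    have horth := orthInt' k n s hs
    rw [GInt]
    rw [Finset.sum_range_succ (fun a => cLeZ k n (k - a) * hInt k n (((1:ℕ) : ℤ) + s + a)) k]
    have hc : ∀ a ∈ Finset.range k,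
        cLeZ k n (k - a) * hInt k n (((1:ℕ) : ℤ) + s + a)
          = cLeZ k n (k - (1 + a)) * hInt k n (((1 + a : ℕ) : ℤ) + s)
            + (-1) ^ (k - a) * eZ k n (k - a) * hInt k n (s + 1 + a) := by
      intro a ha
      simp only [Finset.mem_range] at ha
      have h1 : k - a = (k - (1 + a)) + 1 := by omega
      have h2 : ((1 + a : ℕ) : ℤ) + s = ((1:ℕ) : ℤ) + s + a := by push_cast; ring
      have h3 : s + 1 + (a : ℤ) = ((1:ℕ) : ℤ) + s + a := by push_cast; ring
      rw [h2, h3, h1, cLeZ_succ, ← h1]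
      ring
    rw [Finset.sum_congr rfl hc, Finset.sum_add_distrib]
    rw [Nat.sub_self, cLeZ_zero]
    have h4 : ((1:ℕ) : ℤ) + s + (k : ℤ) = s + 1 + k := by push_cast; ring
    rw [h4]
    linear_combination horth
  | succ i hi1 ih =>
    intro hik s hs
    have hik' : i ≤ k := by omega
    have hstep : ∑ j ∈ Finset.Icc 1 k, Bc k n (i + 1) j * hInt k n ((j : ℤ) + s)
        = (∑ j ∈ Finset.Icc 1 k, Bc k n i j * hInt k n ((j : ℤ) + s))
          + (-cLeZ k n k) * hInt k n ((i : ℤ) + s) := by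
      have hsplit : ∀ j ∈ Finset.Icc 1 k,
          Bc k n (i + 1) j * hInt k n ((j : ℤ) + s)
            = Bc k n i j * hInt k n ((j : ℤ) + s)
              + (Bc k n (i + 1) j - Bc k n i j) * hInt k n ((j : ℤ) + s) := by
        intro j hj
        ring
      rw [Finset.sum_congr rfl hsplit, Finset.sum_add_distrib]
      congr 1
      rw [Finset.sum_eq_single_of_mem i (Finset.mem_Icc.2 ⟨hi1, hik'⟩)
        (fun j hj hne => by
          rw [Bc, Bc]
          by_cases hlt : j < i
          · rw [if_pos hlt, if_pos (by omega)]
            ring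
          · rw [if_neg hlt, if_neg (by omega)]
            ring)]
      rw [Bc, Bc, if_pos (by omega), if_neg (by omega)]
      rw [show ((-1 : MvPolynomial (Fin k ⊕ Fin n) ℤ) ^ (k - i) * cGeZ k n (k - i + 1)
          - cLeZ k n (k - i)) = -cLeZ k n k from CC k n hi1 hik']
    rw [hstep, ← ih hik' s hs]
    have hrec := Grec k n ((i : ℤ) + s) (by omega)
    rw [show ((i + 1 : ℕ) : ℤ) + s = (i : ℤ) + s + 1 by push_cast; ring, hrec]
    ring

end GAux

/-- Equivariant matrix identity `G' = A·H' + C^ζ_{≥n-k+2}`: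
for `n ≥ k ≥ 1` and `1 ≤ i ≤ k`,
`(-1)^{n-k+i} G'_{n-k+i}(z,ζ) = Σ_{j=1}^{k} A_{ij} · (-1)^{n-k+j} h'_{n-k+j}(z,ζ) + C_i`. -/
theorem GPrime_eq_A_mul_hPrime_add_C (n k : ℕ) (hk : 1 ≤ k) (hkn : k ≤ n)
    (i : ℕ) (hi1 : 1 ≤ i) (hik : i ≤ k) :
    (-1) ^ (n - k + i) * GPrime k n (n - k + i)
      = (∑ j ∈ Finset.Icc 1 k, AMat k n i j * ((-1) ^ (n - k + j) * hPrime k n (n - k + j)))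
        + CVec k n i := by
  set N := n - k with hN
  have hNk : N + k = n := by omega
  have stepA : (-1 : MvPolynomial (Fin k ⊕ Fin n) ℤ) ^ (N + i) * GPrime k n (N + i)
      = (∑ a ∈ Finset.range (n + 1),
          (-1 : MvPolynomial (Fin k ⊕ Fin n) ℤ) ^ (N + i + a) * eZeta k n a
            * GAux.GInt k n ((N : ℤ) + i - a)) + CVec k n i := by
    rw [GPrime, Finset.Nat.sum_antidiagonal_eq_sum_range_succ_mk, Finset.mul_sum]
    have hterm : ∀ a ∈ Finset.range (N + i + 1),
        (-1 : MvPolynomial (Fin k ⊕ Fin n) ℤ) ^ (N + i)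
            * ((-1) ^ a * eZeta k n a * GZ k n (N + i - a))
          = (-1) ^ (N + i + a) * eZeta k n a * GAux.GInt k n ((N : ℤ) + i - a) := by
      intro a ha
      simp only [Finset.mem_range] at ha
      rw [show (N : ℤ) + i - a = ((N + i - a : ℕ) : ℤ) by
        push_cast [Nat.cast_sub (by omega : a ≤ N + i)]; ring]
      rw [GAux.GInt_ofNat, pow_add]
      ring
    rw [Finset.sum_congr rfl hterm]
    rw [Finset.range_eq_Ico, Finset.range_eq_Ico,
      ← Finset.sum_Ico_consecutive _ (by omega : 0 ≤ N + i + 1) (by omega : N + i + 1 ≤ n + 1)]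
    have htail : (∑ a ∈ Finset.Ico (N + i + 1) (n + 1),
        (-1 : MvPolynomial (Fin k ⊕ Fin n) ℤ) ^ (N + i + a) * eZeta k n a
          * GAux.GInt k n ((N : ℤ) + i - a)) + CVec k n i = 0 := by
      rcases Nat.lt_or_ge i k with hlt | hge
      · rw [CVec, if_pos hlt, cGeZeta, ← hN,
          show Finset.Icc (N + 1 + i) n = Finset.Ico (N + i + 1) (n + 1) by
            rw [← Finset.Ico_add_one_right_eq_Icc]; congr 1; omega]
        rw [← Finset.sum_add_distrib]
        refine Finset.sum_eq_zero fun b hb => ?_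
        simp only [Finset.mem_Ico] at hb
        rw [GAux.GInt_one k n ((N : ℤ) + i - b) (by omega) (by omega)]
        rw [show b - (N + 1 + i) = b - (N + i + 1) from by omega]
        have hsign : ((-1 : MvPolynomial (Fin k ⊕ Fin n) ℤ)) ^ (N + i + b)
            = -(-1) ^ (b - (N + i + 1)) := by
          rw [GAux.npow_helper k n (N + i + b) ((b - (N + i + 1)) + 1) (N + i) (by omega),
            pow_succ]
          ring
        rw [hsign]
        ring
      · rw [CVec, if_neg (by omega),
          show Finset.Ico (N + i + 1) (n + 1) = ∅ by apply Finset.Ico_eq_empty; omega]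
        simp
    linear_combination -htail
  have stepB : ∀ j ∈ Finset.Icc 1 k,
      (-1 : MvPolynomial (Fin k ⊕ Fin n) ℤ) ^ (N + j) * hPrime k n (N + j)
        = ∑ a ∈ Finset.range (n + 1),
            (-1) ^ (N + j + a) * eZeta k n a * GAux.hInt k n ((N : ℤ) + j - a) := by
    intro j hj
    simp only [Finset.mem_Icc] at hj
    rw [hPrime, Finset.Nat.sum_antidiagonal_eq_sum_range_succ_mk, Finset.mul_sum]
    have hterm : ∀ a ∈ Finset.range (N + j + 1),
        (-1 : MvPolynomial (Fin k ⊕ Fin n) ℤ) ^ (N + j)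
            * ((-1) ^ a * eZeta k n a * hZ k n (N + j - a))
          = (-1) ^ (N + j + a) * eZeta k n a * GAux.hInt k n ((N : ℤ) + j - a) := by
      intro a ha
      simp only [Finset.mem_range] at ha
      rw [show (N : ℤ) + j - a = ((N + j - a : ℕ) : ℤ) by
        push_cast [Nat.cast_sub (by omega : a ≤ N + j)]; ring]
      rw [GAux.hInt_ofNat, pow_add]
      ring
    rw [Finset.sum_congr rfl hterm]
    refine Finset.sum_subset (Finset.range_subset_range.2 (by omega)) fun a _ ha => ?_
    simp only [Finset.mem_range, not_lt] at ha
    rw [GAux.hInt_neg k n (by omega : (N : ℤ) + j - a < 0)]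
    ring
  have hper : ∀ a ∈ Finset.range (n + 1),
      (-1 : MvPolynomial (Fin k ⊕ Fin n) ℤ) ^ (N + i + a) * eZeta k n a
          * GAux.GInt k n ((N : ℤ) + i - a)
        = ∑ j ∈ Finset.Icc 1 k, AMat k n i j
            * ((-1) ^ (N + j + a) * eZeta k n a * GAux.hInt k n ((N : ℤ) + j - a)) := by
    intro a ha
    simp only [Finset.mem_range] at ha
    have hs : -(k : ℤ) ≤ (N : ℤ) - a := by omega
    have hKey := GAux.Key k n i hi1 hik ((N : ℤ) - a) hs
    have hterm : ∀ j ∈ Finset.Icc 1 k,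
        AMat k n i j * ((-1 : MvPolynomial (Fin k ⊕ Fin n) ℤ) ^ (N + j + a) * eZeta k n a
            * GAux.hInt k n ((N : ℤ) + j - a))
          = ((-1) ^ (N + a) * eZeta k n a)
              * ((-1) ^ i * (GAux.Bc k n i j * GAux.hInt k n ((j : ℤ) + ((N : ℤ) - a)))) := by
      intro j hj
      simp only [Finset.mem_Icc] at hj
      have h1 : ((-1 : MvPolynomial (Fin k ⊕ Fin n) ℤ)) ^ (N + j + a)
          = (-1) ^ (N + a) * (-1) ^ j := by
        rw [show N + j + a = (N + a) + j from by omega, pow_add]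
      have h2 : (N : ℤ) + j - a = (j : ℤ) + ((N : ℤ) - a) := by ring
      have h3 := GAux.normA k n hi1 hik hj.1 hj.2
      calc AMat k n i j * ((-1 : MvPolynomial (Fin k ⊕ Fin n) ℤ) ^ (N + j + a) * eZeta k n a
              * GAux.hInt k n ((N : ℤ) + j - a))
          = (AMat k n i j * (-1) ^ j)
              * ((-1) ^ (N + a) * eZeta k n a * GAux.hInt k n ((N : ℤ) + j - a)) := by
            rw [h1]; ring
        _ = ((-1) ^ i * GAux.Bc k n i j)
              * ((-1) ^ (N + a) * eZeta k n a * GAux.hInt k n ((N : ℤ) + j - a)) := by rw [h3]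
        _ = ((-1) ^ (N + a) * eZeta k n a)
              * ((-1) ^ i * (GAux.Bc k n i j * GAux.hInt k n ((j : ℤ) + ((N : ℤ) - a)))) := by
            rw [h2]; ring
    rw [Finset.sum_congr rfl hterm, ← Finset.mul_sum, ← Finset.mul_sum, ← hKey]
    rw [show (i : ℤ) + ((N : ℤ) - a) = (N : ℤ) + i - a from by ring,
      show N + i + a = (N + a) + i from by omega, pow_add]
    ring
  calc (-1 : MvPolynomial (Fin k ⊕ Fin n) ℤ) ^ (N + i) * GPrime k n (N + i)
      = (∑ a ∈ Finset.range (n + 1),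
          (-1 : MvPolynomial (Fin k ⊕ Fin n) ℤ) ^ (N + i + a) * eZeta k n a
            * GAux.GInt k n ((N : ℤ) + i - a)) + CVec k n i := stepA
    _ = (∑ a ∈ Finset.range (n + 1), ∑ j ∈ Finset.Icc 1 k, AMat k n i j
            * ((-1) ^ (N + j + a) * eZeta k n a * GAux.hInt k n ((N : ℤ) + j - a)))
          + CVec k n i := by
        rw [Finset.sum_congr rfl hper]
    _ = (∑ j ∈ Finset.Icc 1 k, AMat k n i j * ((-1) ^ (N + j) * hPrime k n (N + j)))
          + CVec k n i := by
        congr 1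
        rw [Finset.sum_comm]
        refine Finset.sum_congr rfl fun j hj => ?_
        rw [stepB j hj, Finset.mul_sum]

end
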